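/- Let T_R, T_B be finite nonempty sets in ℝ^d with conv(T_R) ∩ conv(T_B) = ∅, and let (r, b) be any closest pair with r ∈ conv(T_R), b ∈ conv(T_B) realizing dist(conv(T_R), conv(T_B)). Then the perpendicular bisector hyperplane h* of the segment rb is a strong separator of T = T_R ∪ T_B with margin M_{h*}(T) = dist(r, b)/2, and every strong separator h ≠ h* satisfies M_h(T) < dist(r, b)/2. In particular the maximum-margin separator of T exists and is unique, and it equals h* for every choice of closest pair (r, b). -/

import Mathlib

open scoped RealInnerProductSpace

/-- The hyperplane `{x : ⟪w, x⟫ = c}`. -/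
def hplane (d : ℕ) (w : EuclideanSpace ℝ (Fin d)) (c : ℝ) :
    Set (EuclideanSpace ℝ (Fin d)) :=
  {x | ⟪w, x⟫ = c}

/-- The margin `M_h(T) = min_{a ∈ T} dist(a, h)` of a hyperplane `h` w.r.t. a set `T`. -/
noncomputable def margin (d : ℕ) (T h : Set (EuclideanSpace ℝ (Fin d))) : ℝ :=
  sInf ((fun a => Metric.infDist a h) '' T)

lemma hplane_nonempty {d : ℕ} {w : EuclideanSpace ℝ (Fin d)} (hw : w ≠ 0) (c : ℝ) :
    (hplane d w c).Nonempty := by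
  refine ⟨(c / ‖w‖ ^ 2) • w, ?_⟩
  have hw2 : ‖w‖ ^ 2 ≠ 0 := pow_ne_zero _ (norm_ne_zero_iff.mpr hw)
  simp only [hplane, Set.mem_setOf_eq, real_inner_smul_right, real_inner_self_eq_norm_sq]
  field_simp

lemma infDist_hplane_eq {d : ℕ} {w : EuclideanSpace ℝ (Fin d)} (hw : w ≠ 0) (c : ℝ)
    (a : EuclideanSpace ℝ (Fin d)) :
    Metric.infDist a (hplane d w c) = |⟪w, a⟫ - c| / ‖w‖ := by
  have hwpos : (0 : ℝ) < ‖w‖ := norm_pos_iff.mpr hw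
  have hw2 : ‖w‖ ^ 2 ≠ 0 := pow_ne_zero _ hwpos.ne'
  apply le_antisymm
  · have hp : a + ((c - ⟪w, a⟫) / ‖w‖ ^ 2) • w ∈ hplane d w c := by
      simp only [hplane, Set.mem_setOf_eq, inner_add_right, real_inner_smul_right,
        real_inner_self_eq_norm_sq]
      field_simp
      ring
    refine le_trans (Metric.infDist_le_dist_of_mem hp) ?_
    rw [dist_self_add_right, norm_smul, Real.norm_eq_abs, abs_div, abs_sub_comm, abs_pow,
      abs_norm]
    rw [div_mul_eq_mul_div, sq, ← div_div, mul_div_assoc]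
    rw [div_self hwpos.ne', mul_one]
  · rw [Metric.infDist_eq_iInf]
    haveI : Nonempty (hplane d w c) := (hplane_nonempty hw c).to_subtype
    refine le_ciInf fun y => ?_
    have hy : ⟪w, (y : EuclideanSpace ℝ (Fin d))⟫ = c := y.2
    have h0 : ⟪w, a⟫ - c = ⟪w, a - y⟫ := by rw [inner_sub_right, hy]
    have h1 : |⟪w, a⟫ - c| ≤ ‖w‖ * ‖a - y‖ := by
      rw [h0]; exact abs_real_inner_le_norm _ _
    rw [div_le_iff₀ hwpos, dist_eq_norm]
    linarith [h1]

variable {F : Type*} [NormedAddCommGroup F] [InnerProductSpace ℝ F]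
variable {F : Type*} [NormedAddCommGroup F] [InnerProductSpace ℝ F]

lemma sep_aux' {K : Set F} (hK : Convex ℝ K) {u v : F} (hv : v ∈ K)
    (hmin : ∀ x ∈ K, dist u v ≤ dist u x) :
    ∀ x ∈ K, ⟪u - v, x - v⟫ ≤ 0 := by
  have hiInf : ‖u - v‖ = ⨅ w : K, ‖u - w‖ := by
    haveI : Nonempty K := ⟨⟨v, hv⟩⟩
    apply le_antisymm
    · refine le_ciInf fun x => ?_
      have hx := hmin x x.2
      rwa [dist_eq_norm, dist_eq_norm] at hx
    · have bdd : BddBelow (Set.range fun w : K => ‖u - (w : F)‖) := by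
        refine ⟨0, ?_⟩
        rintro x ⟨y, rfl⟩
        exact norm_nonneg _
      exact ciInf_le bdd ⟨v, hv⟩
  exact (norm_eq_iInf_iff_real_inner_le_zero hK hv).1 hiInf

/-- Let `(r, b)` be a closest pair between the disjoint convex hulls of
`T_R` and `T_B`.  The perpendicular bisector `h*` of the segment `rb` is a strong
separator of `T = T_R ∪ T_B` with margin `dist(r,b)/2`, and every strong separator
`h ≠ h*` has margin `< dist(r,b)/2`; hence `h*` is the unique maximum-margin separator,
for every choice of closest pair. -/
theorem stmt_8 (d : ℕ) (TR TB : Finset (EuclideanSpace ℝ (Fin d)))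
    (hR : TR.Nonempty) (hB : TB.Nonempty)
    (hdisj : convexHull ℝ (TR : Set (EuclideanSpace ℝ (Fin d))) ∩
      convexHull ℝ (TB : Set (EuclideanSpace ℝ (Fin d))) = ∅)
    (r b : EuclideanSpace ℝ (Fin d))
    (hr : r ∈ convexHull ℝ (TR : Set (EuclideanSpace ℝ (Fin d))))
    (hb : b ∈ convexHull ℝ (TB : Set (EuclideanSpace ℝ (Fin d))))
    (hclosest : dist r b = sInf (Set.image2 dist
      (convexHull ℝ (TR : Set (EuclideanSpace ℝ (Fin d))))
      (convexHull ℝ (TB : Set (EuclideanSpace ℝ (Fin d)))))) :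
    -- `h*` is a strong separator …
    (b - r ≠ 0 ∧
      (∀ x ∈ TR, ⟪b - r, x⟫ < ⟪b - r, (1 / 2 : ℝ) • (r + b)⟫) ∧
      (∀ y ∈ TB, ⟪b - r, (1 / 2 : ℝ) • (r + b)⟫ < ⟪b - r, y⟫)) ∧
    -- … with margin `dist r b / 2` …
    margin d (↑TR ∪ ↑TB) (hplane d (b - r) ⟪b - r, (1 / 2 : ℝ) • (r + b)⟫) =
      dist r b / 2 ∧
    -- … and every other strong separator has strictly smaller margin.
    ∀ h : Set (EuclideanSpace ℝ (Fin d)),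
      (∃ (w : EuclideanSpace ℝ (Fin d)) (c : ℝ), w ≠ 0 ∧ h = hplane d w c ∧
        (∀ x ∈ TR, ⟪w, x⟫ < c) ∧ (∀ y ∈ TB, c < ⟪w, y⟫)) →
      h ≠ hplane d (b - r) ⟪b - r, (1 / 2 : ℝ) • (r + b)⟫ →
      margin d (↑TR ∪ ↑TB) h < dist r b / 2 := by
  classical
  have hbr : b - r ≠ 0 := by
    intro h0
    rw [sub_eq_zero] at h0
    have hmem : r ∈ convexHull ℝ (TR : Set (EuclideanSpace ℝ (Fin d))) ∩
        convexHull ℝ (TB : Set (EuclideanSpace ℝ (Fin d))) := ⟨hr, h0 ▸ hb⟩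
    rw [hdisj] at hmem
    exact hmem
  have hnpos : (0 : ℝ) < ‖b - r‖ := norm_pos_iff.mpr hbr
  have hD : dist r b = ‖b - r‖ := by rw [dist_eq_norm, norm_sub_rev]
  set c₀ : ℝ := ⟪b - r, (1 / 2 : ℝ) • (r + b)⟫ with hc₀
  have hinner : ⟪b - r, b - r⟫ = ‖b - r‖ ^ 2 := real_inner_self_eq_norm_sq _
  have hc₀r : c₀ = ⟪b - r, r⟫ + ‖b - r‖ ^ 2 / 2 := by
    rw [hc₀, ← hinner, inner_sub_right, real_inner_smul_right, inner_add_right]; ring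
  have hc₀b : c₀ = ⟪b - r, b⟫ - ‖b - r‖ ^ 2 / 2 := by
    rw [hc₀, ← hinner, inner_sub_right, real_inner_smul_right, inner_add_right]; ring
  -- distances from the closest pair
  have bdd2 : BddBelow (Set.image2 dist
      (convexHull ℝ (TR : Set (EuclideanSpace ℝ (Fin d))))
      (convexHull ℝ (TB : Set (EuclideanSpace ℝ (Fin d))))) := by
    refine ⟨0, ?_⟩
    rintro z ⟨x, hx, y, hy, rfl⟩
    exact dist_nonneg
  have hminR : ∀ x ∈ convexHull ℝ (TR : Set (EuclideanSpace ℝ (Fin d))),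
      dist b r ≤ dist b x := by
    intro x hx
    rw [dist_comm b r, dist_comm b x, hclosest]
    exact csInf_le bdd2 ⟨x, hx, b, hb, rfl⟩
  have hsepR : ∀ x ∈ convexHull ℝ (TR : Set (EuclideanSpace ℝ (Fin d))),
      ⟪b - r, x - r⟫ ≤ 0 :=
    sep_aux' (convex_convexHull ℝ _) hr hminR
  have hminB : ∀ y ∈ convexHull ℝ (TB : Set (EuclideanSpace ℝ (Fin d))),
      dist r b ≤ dist r y := by
    intro y hy
    rw [hclosest]
    exact csInf_le bdd2 ⟨r, hr, y, hy, rfl⟩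
  have hsepB : ∀ y ∈ convexHull ℝ (TB : Set (EuclideanSpace ℝ (Fin d))),
      0 ≤ ⟪b - r, y - b⟫ := by
    intro y hy
    have h1 := sep_aux' (convex_convexHull ℝ _) hb hminB y hy
    have h2 : ⟪r - b, y - b⟫ = -⟪b - r, y - b⟫ := by
      rw [← inner_neg_left, neg_sub]
    linarith [h1, h2.symm.le, h2.le]
  -- part 1: strong separation by h*
  have hltR : ∀ x ∈ TR, ⟪b - r, x⟫ < c₀ := by
    intro x hx
    have h1 := hsepR x (subset_convexHull ℝ _ (Finset.mem_coe.mpr hx))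
    rw [inner_sub_right] at h1
    have h2 : (0 : ℝ) < ‖b - r‖ ^ 2 := by positivity
    rw [hc₀r]
    linarith
  have hltB : ∀ y ∈ TB, c₀ < ⟪b - r, y⟫ := by
    intro y hy
    have h1 := hsepB y (subset_convexHull ℝ _ (Finset.mem_coe.mpr hy))
    rw [inner_sub_right] at h1
    have h2 : (0 : ℝ) < ‖b - r‖ ^ 2 := by positivity
    rw [hc₀b]
    linarith
  -- key lemma about any strong separator
  have key : ∀ (w : EuclideanSpace ℝ (Fin d)) (c : ℝ), w ≠ 0 →
      (∀ x ∈ TR, ⟪w, x⟫ < c) → (∀ y ∈ TB, c < ⟪w, y⟫) →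
      margin d (↑TR ∪ ↑TB) (hplane d w c) ≤ ‖b - r‖ / 2 ∧
      (margin d (↑TR ∪ ↑TB) (hplane d w c) = ‖b - r‖ / 2 →
        hplane d w c = hplane d (b - r) c₀) := by
    intro w c hw hsR hsB
    have hwpos : (0 : ℝ) < ‖w‖ := norm_pos_iff.mpr hw
    have bddm : BddBelow ((fun a => Metric.infDist a (hplane d w c)) ''
        (↑TR ∪ ↑TB : Set (EuclideanSpace ℝ (Fin d)))) := by
      refine ⟨0, ?_⟩
      rintro z ⟨a, ha, rfl⟩
      exact Metric.infDist_nonneg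
    have hup : ∀ a ∈ (↑TR ∪ ↑TB : Set (EuclideanSpace ℝ (Fin d))),
        margin d (↑TR ∪ ↑TB) (hplane d w c) ≤ Metric.infDist a (hplane d w c) :=
      fun a ha => csInf_le bddm ⟨a, ha, rfl⟩
    have hlin : IsLinearMap ℝ (fun x : EuclideanSpace ℝ (Fin d) => ⟪w, x⟫) :=
      ⟨fun x y => inner_add_right w x y, fun t x => real_inner_smul_right w x t⟩
    set m := margin d (↑TR ∪ ↑TB) (hplane d w c) with hm
    have hRhull : ∀ x ∈ convexHull ℝ (TR : Set (EuclideanSpace ℝ (Fin d))),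
        ⟪w, x⟫ ≤ c - m * ‖w‖ := by
      intro x hx
      refine convexHull_min ?_ (convex_halfSpace_le hlin (c - m * ‖w‖)) hx
      intro a ha
      have h1 := hup a (Or.inl ha)
      rw [infDist_hplane_eq hw] at h1
      have hlt := hsR a (Finset.mem_coe.mp ha)
      have h2 : |⟪w, a⟫ - c| = c - ⟪w, a⟫ := by
        rw [abs_of_nonpos (by linarith)]; ring
      rw [h2, le_div_iff₀ hwpos] at h1
      simp only [Set.mem_setOf_eq]
      linarith
    have hBhull : ∀ y ∈ convexHull ℝ (TB : Set (EuclideanSpace ℝ (Fin d))),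
        c + m * ‖w‖ ≤ ⟪w, y⟫ := by
      intro y hy
      refine convexHull_min ?_ (convex_halfSpace_ge hlin (c + m * ‖w‖)) hy
      intro a ha
      have h1 := hup a (Or.inr ha)
      rw [infDist_hplane_eq hw] at h1
      have hlt := hsB a (Finset.mem_coe.mp ha)
      have h2 : |⟪w, a⟫ - c| = ⟪w, a⟫ - c := abs_of_nonneg (by linarith)
      rw [h2, le_div_iff₀ hwpos] at h1
      simp only [Set.mem_setOf_eq]
      linarith
    have hrw := hRhull r hr
    have hbw := hBhull b hb
    have hCS : ⟪w, b - r⟫ ≤ ‖w‖ * ‖b - r‖ := real_inner_le_norm w (b - r)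
    have hsub : ⟪w, b - r⟫ = ⟪w, b⟫ - ⟪w, r⟫ := inner_sub_right w b r
    have hle : m ≤ ‖b - r‖ / 2 := by
      have h3 : (2 * m) * ‖w‖ ≤ ‖b - r‖ * ‖w‖ := by
        have : 2 * (m * ‖w‖) ≤ ⟪w, b⟫ - ⟪w, r⟫ := by linarith
        nlinarith
      have h4 := le_of_mul_le_mul_right h3 hwpos
      linarith
    refine ⟨hle, ?_⟩
    intro hmeq
    rw [hmeq] at hrw hbw
    have heqCS : ⟪w, b - r⟫ = ‖w‖ * ‖b - r‖ := by
      have hlow : ‖w‖ * ‖b - r‖ ≤ ⟪w, b - r⟫ := by nlinarith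
      linarith
    have hpar : ‖b - r‖ • w = ‖w‖ • (b - r) := inner_eq_norm_mul_iff_real.mp heqCS
    have hkeyx : ∀ x : EuclideanSpace ℝ (Fin d),
        ‖b - r‖ * ⟪w, x⟫ = ‖w‖ * ⟪b - r, x⟫ := by
      intro x
      have h1 : ⟪‖b - r‖ • w, x⟫ = ⟪‖w‖ • (b - r), x⟫ := by rw [hpar]
      rwa [real_inner_smul_left, real_inner_smul_left] at h1
    have hceq : c = ⟪w, r⟫ + ‖b - r‖ / 2 * ‖w‖ := by nlinarith
    have hcc : ‖b - r‖ * c = ‖w‖ * c₀ := by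
      rw [hceq, hc₀r]
      linear_combination hkeyx r
    ext x
    simp only [hplane, Set.mem_setOf_eq]
    constructor
    · intro hx
      have h1 : ‖w‖ * ⟪b - r, x⟫ = ‖w‖ * c₀ := by rw [← hkeyx x, hx, hcc]
      exact mul_left_cancel₀ hwpos.ne' h1
    · intro hx
      have h1 : ‖b - r‖ * ⟪w, x⟫ = ‖b - r‖ * c := by rw [hkeyx x, hx, ← hcc]
      exact mul_left_cancel₀ hnpos.ne' h1
  refine ⟨⟨hbr, hltR, hltB⟩, ?_, ?_⟩
  · -- margin of h* equals dist r b / 2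
    rw [hD]
    apply le_antisymm (key (b - r) c₀ hbr hltR hltB).1
    show ‖b - r‖ / 2 ≤ sInf _
    apply le_csInf
    · obtain ⟨a₀, ha₀⟩ := hR
      exact ⟨_, ⟨a₀, Or.inl (Finset.mem_coe.mpr ha₀), rfl⟩⟩
    · rintro z ⟨a, ha, rfl⟩
      show ‖b - r‖ / 2 ≤ Metric.infDist a (hplane d (b - r) c₀)
      rw [infDist_hplane_eq hbr, le_div_iff₀ hnpos]
      have hsq : ‖b - r‖ / 2 * ‖b - r‖ = ‖b - r‖ ^ 2 / 2 := by ring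
      rw [hsq]
      rcases ha with ha | ha
      · have h1 := hsepR a (subset_convexHull ℝ _ ha)
        rw [inner_sub_right] at h1
        refine le_trans ?_ (neg_le_abs _)
        rw [hc₀r]
        linarith
      · have h1 := hsepB a (subset_convexHull ℝ _ ha)
        rw [inner_sub_right] at h1
        refine le_trans ?_ (le_abs_self _)
        rw [hc₀b]
        linarith
  · rintro h ⟨w, c, hw, rfl, hsRw, hsBw⟩ hne
    rw [hD]
    rcases lt_or_eq_of_le (key w c hw hsRw hsBw).1 with hlt | heq
    · exact hlt
    · exact absurd ((key w c hw hsRw hsBw).2 heq) hne
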